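/- Let T be an ergodic measure-preserving transformation on a probability space (Ω, 𝔉, μ) and X : Ω → ℝⁿ a measurable map. Then σ(X) is contained, modulo μ-null sets, in the ordinal σ-algebra generated by all ordinal partitions 𝒫_d(X, T), d ≥ 1. -/

import Mathlib

open MeasureTheory Set MeasurableSpace Filter
open scoped ENNReal NNReal Topology symmDiff
set_option maxHeartbeats 1000000
set_option synthInstance.maxHeartbeats 400000

/-- The element of the ordinal partition `𝒫_d(X,T)` corresponding to the
permutation `π = (i₀,…,i_d)` of `{0,…,d}`: the set of `ω` with
`X(T^{i₀}ω) ≥ X(T^{i₁}ω) ≥ … ≥ X(T^{i_d}ω)`, ties broken by requiring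
`i_τ > i_{τ+1}` in case of equality. -/
def ordCell {Ω : Type*} (X : Ω → ℝ) (T : Ω → Ω) (d : ℕ)
    (π : Equiv.Perm (Fin (d + 1))) : Set Ω :=
  {ω | ∀ τ : Fin d,
    X (T^[(π τ.castSucc : ℕ)] ω) > X (T^[(π τ.succ : ℕ)] ω) ∨
    (X (T^[(π τ.castSucc : ℕ)] ω) = X (T^[(π τ.succ : ℕ)] ω) ∧
      (π τ.succ : ℕ) < (π τ.castSucc : ℕ))}

namespace OrdAux
/-- key function -/
def K {d : ℕ} (v : Fin (d + 1) → ℝ) (j : Fin (d + 1)) : ℝ ×ₗ ℕ :=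
  toLex (-(v j), d - (j : ℕ))

lemma K_lt_iff {d : ℕ} (v : Fin (d + 1) → ℝ) (a b : Fin (d + 1)) :
    K v a < K v b ↔ v b < v a ∨ (v a = v b ∧ (b : ℕ) < (a : ℕ)) := by
  rw [K, K, Prod.Lex.lt_iff]
  simp only [ofLex_toLex]
  constructor
  · rintro (h | ⟨h1, h2⟩)
    · exact Or.inl (by linarith)
    · refine Or.inr ⟨by linarith, ?_⟩
      have ha := a.isLt
      have hb := b.isLt
      omega
  · rintro (h | ⟨h1, h2⟩)
    · exact Or.inl (by simpa using h)
    · refine Or.inr ⟨by rw [h1], ?_⟩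
      have ha := a.isLt
      have hb := b.isLt
      omega

lemma mem_ordCell_iff {Ω : Type*} (X : Ω → ℝ) (T : Ω → Ω) (d : ℕ)
    (π : Equiv.Perm (Fin (d + 1))) (ω : Ω) :
    ω ∈ ordCell X T d π ↔ StrictMono (fun j => K (fun j : Fin (d+1) => X (T^[(j : ℕ)] ω)) (π j)) := by
  rw [Fin.strictMono_iff_lt_succ]
  constructor
  · intro h τ
    rw [K_lt_iff]
    rcases h τ with h' | h'
    · exact Or.inl h'
    · exact Or.inr ⟨h'.1, h'.2⟩
  · intro h τ
    have := h τ
    rw [K_lt_iff] at this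
    rcases this with h' | h'
    · exact Or.inl h'
    · exact Or.inr ⟨h'.1, h'.2⟩

lemma exists_mem_ordCell {Ω : Type*} (X : Ω → ℝ) (T : Ω → Ω) (d : ℕ) (ω : Ω) :
    ∃ π : Equiv.Perm (Fin (d + 1)), ω ∈ ordCell X T d π := by
  set v : Fin (d+1) → ℝ := fun j => X (T^[(j : ℕ)] ω) with hv
  refine ⟨Tuple.sort (K v), ?_⟩
  rw [mem_ordCell_iff]
  have hinj : Function.Injective (K v) := by
    intro a b hab
    have : d - (a : ℕ) = d - (b : ℕ) := congrArg (fun p => (ofLex p).2) hab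
    have ha := a.isLt; have hb := b.isLt
    exact Fin.ext (by omega)
  exact (Tuple.monotone_sort (K v)).strictMono_of_injective (hinj.comp (Tuple.sort (K v)).injective)
end OrdAux

namespace OrdAux
variable {Ω : Type*} (X : Ω → ℝ) (T : Ω → Ω)

lemma gtSet_eq_iUnion (k : ℕ) (hk : 1 ≤ k) :
    {ω | X (T^[k] ω) < X ω} =
      ⋃ π ∈ {π : Equiv.Perm (Fin (k + 1)) | π.symm 0 < π.symm (Fin.last k)},
        ordCell X T k π := by
  ext ω
  set v : Fin (k+1) → ℝ := fun j => X (T^[(j : ℕ)] ω) with hv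
  have hv0 : v 0 = X ω := by simp [hv]
  have hvl : v (Fin.last k) = X (T^[k] ω) := by simp [hv]
  simp only [mem_iUnion, mem_setOf_eq, exists_prop]
  constructor
  · intro h
    obtain ⟨π, hπ⟩ := exists_mem_ordCell X T k ω
    refine ⟨π, ?_, hπ⟩
    rw [mem_ordCell_iff] at hπ
    rcases lt_trichotomy (π.symm 0) (π.symm (Fin.last k)) with h1 | h1 | h1
    · exact h1
    · exfalso
      have : (0 : Fin (k+1)) = Fin.last k := by
        have := congrArg π h1
        simpa using this
      have : (0 : ℕ) = k := congrArg Fin.val this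
      omega
    · exfalso
      have := hπ h1
      simp only [Equiv.apply_symm_apply] at this
      rw [K_lt_iff] at this
      simp only [Fin.val_zero, Fin.val_last, Function.iterate_zero_apply] at this
      rcases this with h' | h'
      · exact absurd h' (not_lt.2 h.le)
      · exact absurd h'.1 (ne_of_lt h)
  · rintro ⟨π, h1, hπ⟩
    rw [mem_ordCell_iff] at hπ
    have := hπ h1
    simp only [Equiv.apply_symm_apply] at this
    rw [K_lt_iff] at this
    simp only [Fin.val_zero, Fin.val_last, Function.iterate_zero_apply] at this
    rcases this with h' | h'
    · exact h'
    · exact absurd h'.2 (by omega)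
end OrdAux

/-- The ordinal σ-algebra `σ(𝒫(X,T))` generated by all ordinal partitions
`𝒫_d(X,T) = ⋁_{i} 𝒫_d(X_i,T)`, `d ≥ 1`. -/
def ordAlg {Ω : Type*} {n : ℕ} (X : Ω → Fin n → ℝ) (T : Ω → Ω) : MeasurableSpace Ω :=
  MeasurableSpace.generateFrom
    {s | ∃ d : ℕ, 1 ≤ d ∧ ∃ i : Fin n, ∃ π : Equiv.Perm (Fin (d + 1)),
      s = ordCell (fun ω => X ω i) T d π}

namespace OrdAux

lemma measurableSet_V {Ω : Type*} {n : ℕ} (X : Ω → Fin n → ℝ) (T : Ω → Ω) (i : Fin n)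
    (k : ℕ) (hk : 1 ≤ k) :
    MeasurableSet[ordAlg X T] {ω | X (T^[k] ω) i < X ω i} := by
  have := gtSet_eq_iUnion (fun ω => X ω i) T k hk
  rw [show {ω | X (T^[k] ω) i < X ω i} = {ω | (fun ω => X ω i) (T^[k] ω) < (fun ω => X ω i) ω} from rfl, this]
  refine MeasurableSet.biUnion (Set.to_countable _) fun π _ => ?_
  exact MeasurableSpace.measurableSet_generateFrom ⟨k, hk, i, π, rfl⟩

variable {Ω : Type*} [MeasurableSpace Ω] {μ : Measure Ω} [IsProbabilityMeasure μ] {T : Ω → Ω}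

local instance : Fact ((1 : ℝ≥0∞) ≤ 2) := ⟨one_le_two⟩

lemma meanErgodic (hT : Ergodic T μ) (g : Ω → ℝ) (hgm : Measurable g)
    (hgb : ∀ ω, ‖g ω‖ ≤ 1) :
    Tendsto (fun N : ℕ => ∫⁻ ω, ENNReal.ofReal
        |(N : ℝ)⁻¹ * ∑ k ∈ Finset.range N, g (T^[k] ω) - ∫ x, g x ∂μ| ∂μ) atTop (𝓝 0) := by
  have hg2 : MemLp g 2 μ := MemLp.of_bound hgm.aestronglyMeasurable 1 (ae_of_all _ hgb)
  set x : Lp ℝ 2 μ := hg2.toLp g with hx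
  set U : Lp ℝ 2 μ →ₗᵢ[ℝ] Lp ℝ 2 μ :=
    Lp.compMeasurePreservingₗᵢ ℝ T hT.toMeasurePreserving with hU
  set Ucl := U.toContinuousLinearMap with hUcl
  have hnorm : ‖Ucl‖ ≤ 1 := U.norm_toContinuousLinearMap_le
  have hmain := Ucl.tendsto_birkhoffAverage_orthogonalProjection (𝕜 := ℝ) hnorm x
  set y : Lp ℝ 2 μ :=
    (Submodule.orthogonalProjectionOnto (Ucl.eqLocus (1 : Lp ℝ 2 μ →L[ℝ] Lp ℝ 2 μ)) x : Lp ℝ 2 μ)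
    with hy
  -- y is a fixed point of the Koopman operator
  have hyfix : Ucl y = y := by
    have := (Submodule.orthogonalProjectionOnto (Ucl.eqLocus (1 : Lp ℝ 2 μ →L[ℝ] Lp ℝ 2 μ)) x).2
    rw [LinearMap.mem_eqLocus] at this
    exact this
  have hUclapp : ∀ z : Lp ℝ 2 μ, Ucl z = Lp.compMeasurePreserving T hT.toMeasurePreserving z :=
    fun z => rfl
  have hyT : (⇑y) ∘ T =ᵐ[μ] ⇑y := by
    have h1 : ⇑(Ucl y) =ᵐ[μ] (⇑y) ∘ T := by
      rw [hUclapp]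
      exact Lp.coeFn_compMeasurePreserving y hT.toMeasurePreserving
    rw [hyfix] at h1
    exact h1.symm
  obtain ⟨c, hc⟩ := hT.ae_eq_const_of_ae_eq_comp₀
    (Lp.aestronglyMeasurable y).aemeasurable.nullMeasurable hyT
  -- iterates of the Koopman operator
  have hIter : ∀ k : ℕ, ⇑(Ucl^[k] x) =ᵐ[μ] fun ω => g (T^[k] ω) := by
    intro k
    induction k with
    | zero => simpa using hg2.coeFn_toLp
    | succ k ih =>
      rw [Function.iterate_succ_apply']
      refine ((hUclapp _ ▸ Lp.coeFn_compMeasurePreserving (Ucl^[k] x)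
        hT.toMeasurePreserving).trans ?_)
      have h2 := hT.toMeasurePreserving.quasiMeasurePreserving.ae_eq_comp ih
      refine h2.trans ?_
      filter_upwards with ω
      simp [Function.comp, Function.iterate_succ_apply]
  -- pointwise version of the Birkhoff average
  have hAvg : ∀ N : ℕ, ⇑(birkhoffAverage ℝ Ucl id N x) =ᵐ[μ]
      fun ω => (N : ℝ)⁻¹ * ∑ k ∈ Finset.range N, g (T^[k] ω) := by
    intro N
    have hsum : ⇑(∑ k ∈ Finset.range N, Ucl^[k] x) =ᵐ[μ]
        fun ω => ∑ k ∈ Finset.range N, g (T^[k] ω) := by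
      induction (Finset.range N) using Finset.induction_on with
      | empty => simpa [Pi.zero_def] using (Lp.coeFn_zero ℝ 2 μ)
      | @insert a s hnot ih =>
        rw [Finset.sum_insert hnot]
        refine (Lp.coeFn_add _ _).trans ?_
        filter_upwards [hIter a, ih] with ω h1 h2
        simp only [Pi.add_apply]
        rw [h1, h2, Finset.sum_insert hnot]
    rw [birkhoffAverage, birkhoffSum]
    simp only [id_eq]
    refine (Lp.coeFn_smul _ _).trans ?_
    filter_upwards [hsum] with ω h1
    simp only [Pi.smul_apply, smul_eq_mul]
    rw [h1]
  -- the integral functional on L²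
  set one : Lp ℝ 2 μ := (memLp_const (1 : ℝ)).toLp _ with hone
  have hφ : ∀ h : Lp ℝ 2 μ, (inner (𝕜 := ℝ) one h : ℝ) = ∫ ω, h ω ∂μ := by
    intro h
    rw [L2.inner_def]
    refine integral_congr_ae ?_
    filter_upwards [(memLp_const (1 : ℝ)).coeFn_toLp] with ω h1
    rw [show (one : Ω → ℝ) ω = 1 from h1]
    simp [RCLike.inner_apply]
  have hint_iter : ∀ k : ℕ, ∫ ω, (Ucl^[k] x : Ω → ℝ) ω ∂μ = ∫ a, g a ∂μ := by
    intro k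
    rw [integral_congr_ae (hIter k)]
    have hTk : MeasurePreserving (T^[k]) μ μ := hT.toMeasurePreserving.iterate k
    have hgsm : AEStronglyMeasurable g (Measure.map (T^[k]) μ) := by
      rw [hTk.map_eq]; exact hgm.aestronglyMeasurable
    have h5 : ∫ a, g a ∂μ = ∫ ω, g (T^[k] ω) ∂μ := by
      conv_lhs => rw [← hTk.map_eq]
      exact integral_map hTk.measurable.aemeasurable hgsm
    exact h5.symm
  have hcI : c = ∫ a, g a ∂μ := by
    have hcont : Continuous fun h : Lp ℝ 2 μ => (inner (𝕜 := ℝ) one h : ℝ) :=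
      (innerSL ℝ one).continuous
    have h1 : Tendsto (fun N => (inner (𝕜 := ℝ) one (birkhoffAverage ℝ Ucl id N x) : ℝ))
        atTop (𝓝 (inner (𝕜 := ℝ) one y)) := (hcont.tendsto y).comp hmain
    have h2 : ∀ N : ℕ, 1 ≤ N →
        (inner (𝕜 := ℝ) one (birkhoffAverage ℝ Ucl id N x) : ℝ) = ∫ a, g a ∂μ := by
      intro N hN
      rw [birkhoffAverage, birkhoffSum, real_inner_smul_right, inner_sum]
      have : ∀ k ∈ Finset.range N, (inner (𝕜 := ℝ) one (id ((⇑Ucl)^[k] x)) : ℝ) = ∫ a, g a ∂μ := by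
        intro k _
        rw [id_eq, hφ, hint_iter k]
      rw [Finset.sum_congr rfl this, Finset.sum_const, Finset.card_range, nsmul_eq_mul]
      have hN' : (N : ℝ) ≠ 0 := by positivity
      field_simp
    have h3 : Tendsto (fun N => (inner (𝕜 := ℝ) one (birkhoffAverage ℝ Ucl id N x) : ℝ))
        atTop (𝓝 (∫ a, g a ∂μ)) := by
      refine Tendsto.congr' ?_ tendsto_const_nhds
      filter_upwards [eventually_ge_atTop 1] with N hN
      exact (h2 N hN).symm
    have h4 : (inner (𝕜 := ℝ) one y : ℝ) = c := by
      rw [hφ, integral_congr_ae hc]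
      simp
    rw [← h4]
    exact tendsto_nhds_unique h1 h3
  -- squeeze
  have hbd : ∀ N : ℕ, (∫⁻ ω, ENNReal.ofReal
      |(N : ℝ)⁻¹ * ∑ k ∈ Finset.range N, g (T^[k] ω) - ∫ a, g a ∂μ| ∂μ)
      ≤ ENNReal.ofReal ‖birkhoffAverage ℝ Ucl id N x - y‖ := by
    intro N
    have heq : (fun ω => (N : ℝ)⁻¹ * ∑ k ∈ Finset.range N, g (T^[k] ω) - ∫ a, g a ∂μ)
        =ᵐ[μ] ⇑(birkhoffAverage ℝ Ucl id N x - y) := by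
      filter_upwards [hAvg N, hc, Lp.coeFn_sub (birkhoffAverage ℝ Ucl id N x) y] with ω h1 h2 h3
      rw [h3]
      simp only [Pi.sub_apply]
      rw [h1, h2, hcI]
      rfl
    calc (∫⁻ ω, ENNReal.ofReal
        |(N : ℝ)⁻¹ * ∑ k ∈ Finset.range N, g (T^[k] ω) - ∫ a, g a ∂μ| ∂μ)
        = eLpNorm (fun ω => (N : ℝ)⁻¹ * ∑ k ∈ Finset.range N, g (T^[k] ω) - ∫ a, g a ∂μ) 1 μ := by
          rw [eLpNorm_one_eq_lintegral_enorm]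
          refine lintegral_congr fun ω => ?_
          rw [← Real.enorm_eq_ofReal_abs]
      _ = eLpNorm (⇑(birkhoffAverage ℝ Ucl id N x - y)) 1 μ := eLpNorm_congr_ae heq
      _ ≤ eLpNorm (⇑(birkhoffAverage ℝ Ucl id N x - y)) 2 μ := by
          exact eLpNorm_le_eLpNorm_of_exponent_le one_le_two
            (Lp.aestronglyMeasurable _)
      _ = ENNReal.ofReal ‖birkhoffAverage ℝ Ucl id N x - y‖ := by
          rw [Lp.norm_def, ENNReal.ofReal_toReal (Lp.eLpNorm_ne_top _)]
  have hub : Tendsto (fun N : ℕ => ENNReal.ofReal ‖birkhoffAverage ℝ Ucl id N x - y‖)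
      atTop (𝓝 0) := by
    have h0 : Tendsto (fun N : ℕ => ‖birkhoffAverage ℝ Ucl id N x - y‖) atTop (𝓝 0) := by
      have := (hmain.sub (tendsto_const_nhds (x := y))).norm
      simpa using this
    have := (ENNReal.continuous_ofReal.tendsto 0).comp h0
    simpa [Function.comp_def] using this
  exact tendsto_of_tendsto_of_tendsto_of_le_of_le tendsto_const_nhds hub
    (fun N => zero_le) hbd

lemma diagonal {ι : Type*} [Countable ι] (μ : Measure Ω) [IsProbabilityMeasure μ]
    (A : ι → ℕ → Ω → ℝ) (c : ι → ℝ)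
    (hmeas : ∀ j N, Measurable (A j N))
    (hconv : ∀ j, Tendsto (fun N => ∫⁻ ω, ENNReal.ofReal |A j N ω - c j| ∂μ) atTop (𝓝 0)) :
    ∃ φ : ℕ → ℕ, StrictMono φ ∧
      ∀ᵐ ω ∂μ, ∀ j, Tendsto (fun m => A j (φ m) ω) atTop (𝓝 (c j)) := by
  obtain ⟨enc, henc⟩ := Countable.exists_injective_nat ι
  have hEv : ∀ m : ℕ, ∀ᶠ N in atTop, ∀ j, enc j ≤ m →
      (∫⁻ ω, ENNReal.ofReal |A j N ω - c j| ∂μ) ≤ (2 : ℝ≥0∞)⁻¹ ^ m := by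
    intro m
    have hfin : {j : ι | enc j ≤ m}.Finite :=
      Set.Finite.preimage henc.injOn (Set.finite_Iic m)
    rw [show (∀ᶠ N in atTop, ∀ j, enc j ≤ m →
        (∫⁻ ω, ENNReal.ofReal |A j N ω - c j| ∂μ) ≤ (2 : ℝ≥0∞)⁻¹ ^ m) =
        (∀ᶠ N in atTop, ∀ j ∈ {j : ι | enc j ≤ m},
        (∫⁻ ω, ENNReal.ofReal |A j N ω - c j| ∂μ) ≤ (2 : ℝ≥0∞)⁻¹ ^ m) from rfl,
      eventually_all_finite hfin]
    intro j _
    have hpos : (0 : ℝ≥0∞) < (2 : ℝ≥0∞)⁻¹ ^ m := by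
      apply ENNReal.pow_pos
      simp
    exact ((hconv j).eventually_lt_const hpos).mono fun N hN => hN.le
  obtain ⟨φ, hφmono, hφ⟩ := extraction_forall_of_eventually hEv
  refine ⟨φ, hφmono, ?_⟩
  rw [ae_all_iff]
  intro j
  have hsummeas : ∀ m : ℕ, Measurable fun ω => ENNReal.ofReal |A j (φ (m + enc j)) ω - c j| :=
    fun m => ENNReal.measurable_ofReal.comp ((hmeas j _).sub measurable_const).abs
  have hsum : (∫⁻ ω, ∑' m : ℕ, ENNReal.ofReal |A j (φ (m + enc j)) ω - c j| ∂μ) ≠ ∞ := by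
    rw [lintegral_tsum fun m => (hsummeas m).aemeasurable]
    have hle : ∀ m : ℕ, (∫⁻ ω, ENNReal.ofReal |A j (φ (m + enc j)) ω - c j| ∂μ)
        ≤ (2 : ℝ≥0∞)⁻¹ ^ m := by
      intro m
      refine le_trans (hφ (m + enc j) j (by omega)) ?_
      exact pow_le_pow_of_le_one (by simp) (by simp) (by omega)
    refine ne_top_of_le_ne_top ?_ (ENNReal.tsum_le_tsum hle)
    rw [ENNReal.tsum_geometric]
    simp [ENNReal.sub_half]
  have hae := ae_lt_top (Measurable.ennreal_tsum hsummeas) hsum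
  filter_upwards [hae] with ω hω
  rw [← tendsto_add_atTop_iff_nat (enc j)]
  have h0 : Tendsto (fun m => ENNReal.ofReal |A j (φ (m + enc j)) ω - c j|) atTop (𝓝 0) :=
    ENNReal.tendsto_atTop_zero_of_tsum_ne_top hω.ne
  have h1 : Tendsto (fun m => |A j (φ (m + enc j)) ω - c j|) atTop (𝓝 0) := by
    have h2 := (ENNReal.tendsto_toReal (show (0 : ℝ≥0∞) ≠ ⊤ by simp)).comp h0
    simp only [Function.comp_def, ENNReal.toReal_zero] at h2
    refine h2.congr fun m => ?_
    exact ENNReal.toReal_ofReal (abs_nonneg _)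
  rw [tendsto_iff_dist_tendsto_zero]
  exact h1.congr fun m => (Real.dist_eq _ _).symm

lemma Gmeas {Ω' : Type*} {m' : MeasurableSpace Ω'} (V : ℕ → Set Ω')
    (hV : ∀ k, MeasurableSet[m'] (V k)) (φ : ℕ → ℕ) :
    @Measurable Ω' ℝ≥0∞ m' _ (fun ω => Filter.limsup (fun m => ENNReal.ofReal
      ((φ m : ℝ)⁻¹ * ∑ k ∈ Finset.range (φ m), (V k).indicator 1 ω)) atTop) := by
  apply Measurable.limsup
  intro m
  apply ENNReal.measurable_ofReal.comp
  apply Measurable.const_mul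
  apply Finset.measurable_sum
  intro k _
  exact measurable_one.indicator (hV k)

lemma key {Ω : Type*} [MeasurableSpace Ω] (μ : Measure Ω) [IsProbabilityMeasure μ]
    (T : Ω → Ω) (hT : Ergodic T μ)
    {n : ℕ} (X : Ω → Fin n → ℝ) (hX : Measurable X) (i : Fin n) (t : ℝ) :
    ∃ s' : Set Ω, MeasurableSet[ordAlg X T] s' ∧ μ (symmDiff {ω | X ω i ≤ t} s') = 0 := by
  set f : Ω → ℝ := fun ω => X ω i with hfdef
  have hf : Measurable f := (measurable_pi_apply i).comp hX
  have hTm : Measurable T := hT.toMeasurePreserving.measurable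
  -- countable set of atoms
  set D : Set ℝ := {a : ℝ | 0 < μ {ω | f ω = a}} with hDdef
  have hDcount : D.Countable := by
    have := Measure.countable_meas_pos_of_disjoint_iUnion
      (μ := μ) (As := fun a : ℝ => {ω | f ω = a})
      (fun a => hf (measurableSet_singleton a))
      (fun a b hab => Set.disjoint_left.2 fun ω h1 h2 => hab (h1.symm.trans h2))
    exact this
  haveI : Countable ↥D := hDcount.to_subtype
  -- the countable family of test sets
  set S : ℚ ⊕ ↥D → Set Ω := fun j =>
    Sum.elim (fun q : ℚ => {ω | f ω ≤ (q : ℝ)}) (fun a : ↥D => {ω | f ω < (a : ℝ)}) j with hSdef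
  have hSmeas : ∀ j, MeasurableSet (S j) := by
    rintro (q | a)
    · exact measurableSet_le hf measurable_const
    · exact measurableSet_lt hf measurable_const
  set A : ℚ ⊕ ↥D → ℕ → Ω → ℝ := fun j N ω =>
    (N : ℝ)⁻¹ * ∑ k ∈ Finset.range N, (S j).indicator 1 (T^[k] ω) with hAdef
  set c : ℚ ⊕ ↥D → ℝ := fun j => (μ (S j)).toReal with hcdef
  have hmeasA : ∀ j N, Measurable (A j N) := by
    intro j N
    apply Measurable.const_mul
    apply Finset.measurable_sum
    intro k _
    exact (measurable_one.indicator (hSmeas j)).comp (hTm.iterate k)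
  have hconv : ∀ j, Tendsto (fun N => ∫⁻ ω, ENNReal.ofReal |A j N ω - c j| ∂μ)
      atTop (𝓝 0) := by
    intro j
    have hb : ∀ ω, ‖(S j).indicator (1 : Ω → ℝ) ω‖ ≤ 1 := by
      intro ω
      by_cases h : ω ∈ S j <;> simp [Set.indicator_apply, h]
    have hint : ∫ x, (S j).indicator 1 x ∂μ = c j := integral_indicator_one (hSmeas j)
    have := meanErgodic hT ((S j).indicator 1) (measurable_one.indicator (hSmeas j)) hb
    rw [hint] at this
    exact this
  obtain ⟨φ, hφmono, hae⟩ := diagonal μ A c hmeasA hconv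
  -- the sets comparing f along the orbit, and the rank function G
  set V : ℕ → Set Ω := fun k => {ω | f (T^[k] ω) < f ω} with hVdef
  have hVord : ∀ k, MeasurableSet[ordAlg X T] (V k) := by
    intro k
    rcases Nat.eq_zero_or_pos k with rfl | hk
    · have : V 0 = ∅ := by
        ext ω; simp [hVdef]
      rw [this]; exact @MeasurableSet.empty _ (ordAlg X T)
    · exact measurableSet_V X T i k hk
  set G : Ω → ℝ≥0∞ := fun ω => Filter.limsup (fun m => ENNReal.ofReal
      ((φ m : ℝ)⁻¹ * ∑ k ∈ Finset.range (φ m), (V k).indicator 1 ω)) atTop with hGdef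
  have hGmeas : @Measurable Ω ℝ≥0∞ (ordAlg X T) _ G := Gmeas V hVord φ
  refine ⟨{ω | G ω < μ {x | f x ≤ t}}, hGmeas measurableSet_Iio, ?_⟩
    -- convergence in ℝ≥0∞ form
  have htend : ∀ ω, (∀ j, Tendsto (fun m => A j (φ m) ω) atTop (𝓝 (c j))) →
      ∀ j, Tendsto (fun m => ENNReal.ofReal (A j (φ m) ω)) atTop (𝓝 (μ (S j))) := by
    intro ω hω j
    have := ENNReal.tendsto_ofReal (hω j)
    rwa [hcdef, ENNReal.ofReal_toReal (measure_ne_top μ _)] at this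
  -- upper bound via rationals above f ω
  have hU1 : ∀ ω, (∀ j, Tendsto (fun m => A j (φ m) ω) atTop (𝓝 (c j))) →
      ∀ q : ℚ, f ω ≤ (q : ℝ) → G ω ≤ μ {x | f x ≤ (q : ℝ)} := by
    intro ω hω q hq
    have h1 : ∀ m, ENNReal.ofReal ((φ m : ℝ)⁻¹ * ∑ k ∈ Finset.range (φ m), (V k).indicator 1 ω)
        ≤ ENNReal.ofReal (A (Sum.inl q) (φ m) ω) := by
      intro m
      apply ENNReal.ofReal_le_ofReal
      apply mul_le_mul_of_nonneg_left _ (by positivity)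
      apply Finset.sum_le_sum
      intro k _
      by_cases h : ω ∈ V k
      · have : T^[k] ω ∈ S (Sum.inl q) := le_trans (le_of_lt h) hq
        simp [Set.indicator_of_mem h, Set.indicator_of_mem this]
      · simp only [Set.indicator_of_notMem h]
        exact Set.indicator_nonneg (fun _ _ => by norm_num) _
    calc G ω ≤ Filter.limsup (fun m => ENNReal.ofReal (A (Sum.inl q) (φ m) ω)) atTop :=
          Filter.limsup_le_limsup (Filter.Eventually.of_forall h1)
      _ = μ (S (Sum.inl q)) := (htend ω hω (Sum.inl q)).limsup_eq
      _ = μ {x | f x ≤ (q : ℝ)} := rfl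
  -- lower bound via rationals below f ω
  have hL1 : ∀ ω, (∀ j, Tendsto (fun m => A j (φ m) ω) atTop (𝓝 (c j))) →
      ∀ q : ℚ, (q : ℝ) < f ω → μ {x | f x ≤ (q : ℝ)} ≤ G ω := by
    intro ω hω q hq
    have h1 : ∀ m, ENNReal.ofReal (A (Sum.inl q) (φ m) ω)
        ≤ ENNReal.ofReal ((φ m : ℝ)⁻¹ * ∑ k ∈ Finset.range (φ m), (V k).indicator 1 ω) := by
      intro m
      apply ENNReal.ofReal_le_ofReal
      apply mul_le_mul_of_nonneg_left _ (by positivity)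
      apply Finset.sum_le_sum
      intro k _
      by_cases h : T^[k] ω ∈ S (Sum.inl q)
      · have : ω ∈ V k := lt_of_le_of_lt (h : f (T^[k] ω) ≤ (q : ℝ)) hq
        simp [Set.indicator_of_mem h, Set.indicator_of_mem this]
      · simp only [Set.indicator_of_notMem h]
        exact Set.indicator_nonneg (fun _ _ => by norm_num) _
    calc μ {x | f x ≤ (q : ℝ)} = μ (S (Sum.inl q)) := rfl
      _ = Filter.liminf (fun m => ENNReal.ofReal (A (Sum.inl q) (φ m) ω)) atTop :=
          (htend ω hω (Sum.inl q)).liminf_eq.symm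
      _ ≤ Filter.liminf (fun m => ENNReal.ofReal
            ((φ m : ℝ)⁻¹ * ∑ k ∈ Finset.range (φ m), (V k).indicator 1 ω)) atTop :=
          Filter.liminf_le_liminf (Filter.Eventually.of_forall h1)
      _ ≤ G ω := Filter.liminf_le_limsup
  -- exact value at atoms
  have hU2 : ∀ ω, (∀ j, Tendsto (fun m => A j (φ m) ω) atTop (𝓝 (c j))) →
      ∀ ha : f ω ∈ D, G ω = μ {x | f x < f ω} := by
    intro ω hω ha
    have h1 : ∀ m, ENNReal.ofReal ((φ m : ℝ)⁻¹ * ∑ k ∈ Finset.range (φ m), (V k).indicator 1 ω)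
        = ENNReal.ofReal (A (Sum.inr ⟨f ω, ha⟩) (φ m) ω) := by
      intro m
      rfl
    rw [hGdef]
    simp only [h1]
    exact (htend ω hω (Sum.inr ⟨f ω, ha⟩)).limsup_eq
  -- null set where the cumulative function is flat without an atom
  set Bad : Set Ω := {ω | f ω ≤ t ∧ μ {x | f x ≤ f ω} = μ {x | f x ≤ t} ∧
      μ {x | f x = f ω} = 0} with hBadDef
  have hmid : ∀ r : ℝ, r ≤ t → μ {x | f x ≤ r} = μ {x | f x ≤ t} → μ {x | f x = r} = 0 →
      μ {ω | r ≤ f ω ∧ f ω ≤ t} = 0 := by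
    intro r hrt hflat hatom
    have hlt : μ {x | f x < r} = μ {x | f x ≤ t} := by
      have hsplit : {x | f x ≤ r} = {x | f x < r} ∪ {x | f x = r} := by
        ext x; simp only [Set.mem_setOf_eq, Set.mem_union]
        constructor
        · intro h; rcases lt_or_eq_of_le h with h | h
          · exact Or.inl h
          · exact Or.inr h
        · rintro (h | h) <;> simp [le_of_lt, h, le_refl]
      have : μ {x | f x ≤ r} = μ {x | f x < r} + μ {x | f x = r} := by
        rw [hsplit]
        exact measure_union (Set.disjoint_left.2 fun x h1 h2 => absurd h2 (ne_of_lt h1))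
          (hf (measurableSet_singleton r))
      rw [hatom, add_zero] at this
      rw [← this, hflat]
    have hsplit2 : {x | f x ≤ t} = {x | f x < r} ∪ {ω | r ≤ f ω ∧ f ω ≤ t} := by
      ext x; simp only [Set.mem_setOf_eq, Set.mem_union]
      constructor
      · intro h; rcases lt_or_ge (f x) r with h2 | h2
        · exact Or.inl h2
        · exact Or.inr ⟨h2, h⟩
      · rintro (h | h)
        · exact le_trans (le_of_lt h) hrt
        · exact h.2
    have h3 : μ {x | f x ≤ t} = μ {x | f x < r} + μ {ω | r ≤ f ω ∧ f ω ≤ t} := by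
      rw [hsplit2]
      exact measure_union (Set.disjoint_left.2 fun x h1 h2 => absurd h2.1 (not_le.2 h1))
        ((measurableSet_le measurable_const hf).inter (measurableSet_le hf measurable_const))
    rw [hlt] at h3
    have hne : μ {x | f x ≤ t} ≠ ∞ := measure_ne_top μ _
    have := h3.symm
    nth_rewrite 2 [show μ {x | f x ≤ t} = μ {x | f x ≤ t} + 0 by rw [add_zero]] at this
    exact (ENNReal.add_right_inj hne).mp this
  have hBadNull : μ Bad = 0 := by
    set S' : Set ℝ := {r | r ≤ t ∧ μ {x | f x ≤ r} = μ {x | f x ≤ t} ∧ μ {x | f x = r} = 0}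
      with hS'def
    have hBadsub : Bad ⊆ f ⁻¹' S' := fun ω hω => hω
    have hmid' : ∀ r ∈ S', μ {ω | r ≤ f ω ∧ f ω ≤ t} = 0 :=
      fun r hr => hmid r hr.1 hr.2.1 hr.2.2
    rcases Set.eq_empty_or_nonempty S' with hS'e | hS'ne
    · refine measure_mono_null hBadsub ?_
      rw [hS'e]
      simp
    by_cases hbdd : BddBelow S'
    · set ρ := sInf S' with hρdef
      by_cases hρ : ρ ∈ S'
      · refine measure_mono_null (fun ω hω => ?_) (hmid' ρ hρ)
        exact ⟨csInf_le hbdd (hBadsub hω), (hBadsub hω).1⟩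
      · have hseq : ∀ m : ℕ, ∃ r ∈ S', r < ρ + 1 / (m + 1) := by
          intro m
          apply Real.lt_sInf_add_pos hS'ne
          positivity
        choose r hr1 hr2 using hseq
        refine measure_mono_null (fun ω hω => ?_)
          (measure_iUnion_null fun m => hmid' (r m) (hr1 m))
        have hfS' : f ω ∈ S' := hBadsub hω
        have hfρ : ρ < f ω :=
          lt_of_le_of_ne (csInf_le hbdd hfS') (fun h => hρ (h ▸ hfS'))
        obtain ⟨m, hm⟩ := exists_nat_one_div_lt (sub_pos.2 hfρ)
        refine Set.mem_iUnion.2 ⟨m, ?_, hfS'.1⟩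
        have : r m < ρ + (f ω - ρ) := lt_trans (hr2 m) (by linarith [hm])
        linarith
    · have hseq : ∀ m : ℕ, ∃ r ∈ S', r < -(m : ℝ) := by
        intro m
        rcases not_bddBelow_iff.1 hbdd (-(m : ℝ)) with ⟨r, hr, hr2⟩
        exact ⟨r, hr, hr2⟩
      choose r hr1 hr2 using hseq
      refine measure_mono_null (fun ω hω => ?_)
        (measure_iUnion_null fun m => hmid' (r m) (hr1 m))
      have hfS' : f ω ∈ S' := hBadsub hω
      obtain ⟨m, hm⟩ := exists_nat_gt (-(f ω))
      refine Set.mem_iUnion.2 ⟨m, ?_, hfS'.1⟩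
      have : r m < f ω := lt_trans (hr2 m) (by linarith)
      exact le_of_lt this
  -- finish: almost-everywhere equivalence
  rw [measure_symmDiff_eq_zero_iff]
  rw [Filter.eventuallyEq_set]
  filter_upwards [hae, measure_eq_zero_iff_ae_notMem.mp hBadNull] with ω hω hωBad
  constructor
  · intro hft
    by_cases hatom : f ω ∈ D
    · have hGeq := hU2 ω hω hatom
      have hstrict : μ {x | f x < f ω} < μ {x | f x ≤ t} := by
        have hsplit : {x | f x ≤ f ω} = {x | f x < f ω} ∪ {x | f x = f ω} := by
          ext x; simp only [Set.mem_setOf_eq, Set.mem_union]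
          constructor
          · intro h; exact lt_or_eq_of_le h
          · rintro (h | h) <;> simp [le_of_lt, h, le_refl]
        have hμsplit : μ {x | f x ≤ f ω} = μ {x | f x < f ω} + μ {x | f x = f ω} := by
          rw [hsplit]
          exact measure_union (Set.disjoint_left.2 fun x h1 h2 => absurd h2 (ne_of_lt h1))
            (hf (measurableSet_singleton _))
        have h1 : μ {x | f x < f ω} < μ {x | f x ≤ f ω} := by
          rw [hμsplit]
          exact ENNReal.lt_add_right (measure_ne_top μ _) (ne_of_gt hatom)
        exact lt_of_lt_of_le h1 (measure_mono fun x hx => le_trans hx hft)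
      rw [hGeq]
      exact hstrict
    · -- not an atom
      have hflat_or : μ {x | f x ≤ f ω} < μ {x | f x ≤ t} ∨
          μ {x | f x ≤ f ω} = μ {x | f x ≤ t} :=
        lt_or_eq_of_le (measure_mono fun x hx => le_trans hx hft)
      rcases hflat_or with hlt | heq
      · -- use right continuity through rationals
        have hiInf : μ {x | f x ≤ f ω} = ⨅ q : {q : ℚ // f ω < (q : ℝ)},
            μ {x | f x ≤ ((q : ℚ) : ℝ)} := by
          rw [← Directed.measure_iInter]
          · congr 1
            ext x
            simp only [Set.mem_iInter, Set.mem_setOf_eq]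
            constructor
            · intro h q
              exact le_trans h (le_of_lt q.2)
            · intro h
              by_contra hcon
              push_neg at hcon
              obtain ⟨q, hq1, hq2⟩ := exists_rat_btwn hcon
              exact absurd (h ⟨q, hq1⟩) (not_le.2 hq2)
          · exact fun q => (measurableSet_le hf measurable_const).nullMeasurableSet
          · rintro ⟨q1, hq1⟩ ⟨q2, hq2⟩
            refine ⟨⟨min q1 q2, ?_⟩, ?_, ?_⟩
            · push_cast
              exact lt_min hq1 hq2
            · intro x hx
              have hx' : f x ≤ ((min q1 q2 : ℚ) : ℝ) := hx
              show f x ≤ (q1 : ℝ)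
              refine le_trans hx' ?_
              push_cast
              exact min_le_left _ _
            · intro x hx
              have hx' : f x ≤ ((min q1 q2 : ℚ) : ℝ) := hx
              show f x ≤ (q2 : ℝ)
              refine le_trans hx' ?_
              push_cast
              exact min_le_right _ _
          · refine ⟨⟨(⌈f ω⌉ : ℚ) + 1, ?_⟩, measure_ne_top μ _⟩
            push_cast
            linarith [Int.le_ceil (f ω)]
        rw [hiInf] at hlt
        obtain ⟨q, hq⟩ := iInf_lt_iff.mp hlt
        exact lt_of_le_of_lt (hU1 ω hω q (le_of_lt q.2)) hq
      · -- flat and not an atom : excluded by the Bad set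
        exfalso
        apply hωBad
        refine ⟨hft, heq, ?_⟩
        rw [hDdef] at hatom
        simp only [Set.mem_setOf_eq, not_lt] at hatom
        exact le_antisymm hatom zero_le
  · intro hG
    by_contra hft
    push_neg at hft
    obtain ⟨q, hq1, hq2⟩ := exists_rat_btwn hft
    have h1 : μ {x | f x ≤ t} ≤ μ {x | f x ≤ (q : ℝ)} :=
      measure_mono fun x hx => le_trans hx (le_of_lt hq1)
    exact absurd (lt_of_le_of_lt (le_trans h1 (hL1 ω hω q hq2)) hG) (lt_irrefl _)

def MOrd {Ω : Type*} [MeasurableSpace Ω] (μ : Measure Ω) {n : ℕ} (X : Ω → Fin n → ℝ)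
    (T : Ω → Ω) : MeasurableSpace Ω where
  MeasurableSet' u := ∃ t', MeasurableSet[ordAlg X T] t' ∧ μ (symmDiff u t') = 0
  measurableSet_empty := ⟨∅, @MeasurableSet.empty _ (ordAlg X T), by simp⟩
  measurableSet_compl := by
    rintro u ⟨t', ht', h0⟩
    exact ⟨t'ᶜ, ht'.compl, by rwa [compl_symmDiff_compl]⟩
  measurableSet_iUnion := by
    intro g hg
    choose t' ht' h0 using hg
    refine ⟨⋃ k, t' k, MeasurableSet.iUnion ht', ?_⟩
    refine measure_mono_null ?_ (measure_iUnion_null h0)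
    intro ω hω
    simp only [Set.mem_symmDiff, Set.mem_iUnion] at hω ⊢
    rcases hω with ⟨⟨k, hk⟩, hn⟩ | ⟨⟨k, hk⟩, hn⟩
    · exact ⟨k, Or.inl ⟨hk, fun h => hn ⟨k, h⟩⟩⟩
    · exact ⟨k, Or.inr ⟨hk, fun h => hn ⟨k, h⟩⟩⟩

end OrdAux

/-- For an ergodic measure-preserving `T` and measurable
`X : Ω → ℝⁿ`, the σ-algebra `σ(X)` is contained, modulo `μ`-null sets, in the
ordinal σ-algebra `σ(𝒫(X,T))`. -/
theorem stmt5 {Ω : Type*} [MeasurableSpace Ω] (μ : Measure Ω) [IsProbabilityMeasure μ]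
    (T : Ω → Ω) (hT : Ergodic T μ)
    {n : ℕ} (X : Ω → Fin n → ℝ) (hX : Measurable X) :
    ∀ s : Set Ω, MeasurableSet[MeasurableSpace.comap X (borel (Fin n → ℝ))] s →
      ∃ t : Set Ω, MeasurableSet[ordAlg X T] t ∧ μ (symmDiff s t) = 0 := by
  intro s hs
  suffices h : MeasurableSpace.comap X (borel (Fin n → ℝ)) ≤ OrdAux.MOrd μ X T from h s hs
  have hpi : borel (Fin n → ℝ) = MeasurableSpace.pi :=
    (BorelSpace.measurable_eq (α := Fin n → ℝ)).symm
  have hpi2 : (MeasurableSpace.pi : MeasurableSpace (Fin n → ℝ)) =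
      ⨆ i : Fin n, (borel ℝ).comap (fun y : Fin n → ℝ => y i) := rfl
  rw [hpi, hpi2, MeasurableSpace.comap_iSup]
  refine iSup_le fun i => ?_
  rw [MeasurableSpace.comap_comp, Real.borel_eq_generateFrom_Iio_rat,
    MeasurableSpace.comap_generateFrom]
  refine MeasurableSpace.generateFrom_le ?_
  rintro u ⟨v, hv, rfl⟩
  simp only [Set.mem_iUnion, Set.mem_singleton_iff] at hv
  obtain ⟨q, rfl⟩ := hv
  have hle : ∀ r : ℝ, (OrdAux.MOrd μ X T).MeasurableSet' {ω | X ω i ≤ r} :=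
    fun r => OrdAux.key μ T hT X hX i r
  have hset : ((fun y : Fin n → ℝ => y i) ∘ X) ⁻¹' (Set.Iio (q : ℝ)) =
      ⋃ m : ℕ, {ω | X ω i ≤ (q : ℝ) - 1 / (m + 1)} := by
    ext ω
    simp only [Set.mem_preimage, Function.comp_apply, Set.mem_Iio, Set.mem_iUnion,
      Set.mem_setOf_eq]
    constructor
    · intro h
      obtain ⟨m, hm⟩ := exists_nat_one_div_lt (sub_pos.2 h)
      exact ⟨m, by linarith⟩
    · rintro ⟨m, hm⟩
      have : (0 : ℝ) < 1 / (m + 1) := by positivity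
      linarith
  show (OrdAux.MOrd μ X T).MeasurableSet' _
  rw [hset]
  exact @MeasurableSet.iUnion Ω ℕ (OrdAux.MOrd μ X T) _ _ fun m => hle _
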